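/- Let λ > 0, δ ∈ (0, 2λ/L_f), μ = 2/(2λ + L_f), τ = L_f²δ²/(8λ). Let x', x ∈ ℝⁿ, η ∈ ∂h(x), and suppose x⁺ = Prox_{μg}((1 − μλ)y − μ∇f(y) + μλx + μη) for some y ∈ ℝⁿ with ‖x⁺ − y‖ ≤ δ‖x' − x‖. Then (λ/2)‖x − x⁺‖² ≤ F(x) − F(x⁺) + τ‖x' − x‖² (an inequality in the extended reals; F(x⁺) is finite because x⁺ lies in the domain of g). -/

import Mathlib

set_option maxHeartbeats 4000000


open Set Filter Topology
open scoped InnerProductSpace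

noncomputable section

abbrev Euc (n : ℕ) := EuclideanSpace ℝ (Fin n)

/-- The subdifferential of a real-valued function `h` at `u`. -/
def SubdiffR {n : ℕ} (h : Euc n → ℝ) (u : Euc n) : Set (Euc n) :=
  {ξ | ∀ z, h u + ⟪ξ, z - u⟫_ℝ ≤ h z}

/-- Convexity for extended-real-valued functions. -/
def ConvexEReal {n : ℕ} (g : Euc n → EReal) : Prop :=
  ∀ x y : Euc n, ∀ a b : ℝ, 0 ≤ a → 0 ≤ b → a + b = 1 →
    g (a • x + b • y) ≤ (a : EReal) * g x + (b : EReal) * g y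

/-- `g` is proper: nowhere `⊥` and somewhere finite. -/
def ProperE {n : ℕ} (g : Euc n → EReal) : Prop :=
  (∀ x, g x ≠ ⊥) ∧ ∃ x, g x ≠ ⊤

/-- `P` is the proximal mapping of `g`: for every `α > 0` and every `x`, `P α x` is
the unique minimizer over `ℝⁿ` of `y ↦ g y + (1/(2α)) ‖x - y‖²`. -/
def IsProx {n : ℕ} (g : Euc n → EReal) (P : ℝ → Euc n → Euc n) : Prop :=
  ∀ α : ℝ, 0 < α → ∀ x p, P α x = p ↔
    (∀ y, g p + ((1/(2*α) * ‖x - p‖^2 : ℝ) : EReal) ≤ g y + ((1/(2*α) * ‖x - y‖^2 : ℝ) : EReal))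

lemma auxLineDeriv {n : ℕ} (f : Euc n → ℝ) (f' : Euc n → Euc n)
    (hfgrad : ∀ z, HasGradientAt f (f' z) z) (b d : Euc n) (t : ℝ) :
    HasDerivAt (fun s : ℝ => f (b + s • d)) ⟪f' (b + t • d), d⟫_ℝ t := by
  have h1 : HasFDerivAt f (InnerProductSpace.toDual ℝ _ (f' (b + t • d))) (b + t • d) :=
    hasGradientAt_iff_hasFDerivAt.mp (hfgrad _)
  have h2 : HasDerivAt (fun s : ℝ => b + s • d) d t := by
    simpa using ((hasDerivAt_id t).smul_const d).const_add b
  have h3 := h1.comp_hasDerivAt t h2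
  simp only [InnerProductSpace.toDual_apply_apply] at h3
  exact h3

lemma convex_grad_ineq {n : ℕ} (f : Euc n → ℝ) (f' : Euc n → Euc n)
    (hconv : ConvexOn ℝ Set.univ f)
    (hfgrad : ∀ z, HasGradientAt f (f' z) z) (b z : Euc n) :
    f b + ⟪f' b, z - b⟫_ℝ ≤ f z := by
  have hline := auxLineDeriv f f' hfgrad b (z - b) 0
  rw [zero_smul, add_zero] at hline
  have hslope : Tendsto (slope (fun s : ℝ => f (b + s • (z - b))) 0) (𝓝[>] 0)
      (𝓝 ⟪f' b, z - b⟫_ℝ) :=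
    (hasDerivAt_iff_tendsto_slope.mp hline).mono_left
      (nhdsWithin_mono _ (fun s hs => ne_of_gt hs))
  have hbound : ∀ᶠ t in 𝓝[>] (0:ℝ),
      slope (fun s : ℝ => f (b + s • (z - b))) 0 t ≤ f z - f b := by
    filter_upwards [Ioo_mem_nhdsGT_of_mem (by norm_num : (0:ℝ) ∈ Ico 0 1)] with t ht
    have hcomb : b + t • (z - b) = (1 - t) • b + t • z := by module
    have hcv := hconv.2 (mem_univ b) (mem_univ z)
      (by linarith [ht.2] : (0:ℝ) ≤ 1 - t) (le_of_lt ht.1) (by ring)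
    rw [slope_def_field]
    rw [hcomb]
    have h0 : b + (0:ℝ) • (z - b) = b := by simp
    rw [div_le_iff₀ (by linarith [ht.1] : (0:ℝ) < t - 0)]
    simp only [smul_eq_mul] at hcv
    simp only [h0]
    nlinarith [hcv]
  have := le_of_tendsto hslope hbound
  linarith


lemma auxDescent {n : ℕ} (f : Euc n → ℝ) (f' : Euc n → Euc n) (Lf : ℝ) (hLf : 0 < Lf)
    (hfgrad : ∀ z, HasGradientAt f (f' z) z)
    (hflip : ∀ z w, ‖f' z - f' w‖ ≤ Lf * ‖z - w‖) (b a : Euc n) :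
    f a ≤ f b + ⟪f' b, a - b⟫_ℝ + Lf/2 * ‖a - b‖^2 := by
  set d := a - b with hd
  set φ : ℝ → ℝ := fun t => f (b + t • d) - t * ⟪f' b, d⟫_ℝ - Lf/2 * t^2 * ‖d‖^2 with hφ
  have hder : ∀ t : ℝ, HasDerivAt φ
      (⟪f' (b + t • d), d⟫_ℝ - ⟪f' b, d⟫_ℝ - Lf * t * ‖d‖^2) t := by
    intro t
    have h1 := auxLineDeriv f f' hfgrad b d t
    have h2 : HasDerivAt (fun s : ℝ => s * ⟪f' b, d⟫_ℝ) ⟪f' b, d⟫_ℝ t := by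
      simpa using (hasDerivAt_id t).mul_const ⟪f' b, d⟫_ℝ
    have h3 : HasDerivAt (fun s : ℝ => Lf/2 * s^2 * ‖d‖^2) (Lf * t * ‖d‖^2) t := by
      have h4 : HasDerivAt (fun s : ℝ => s^2) (2*t) t := by
        simpa using hasDerivAt_pow 2 t
      have h5 := (h4.const_mul (Lf/2)).mul_const (‖d‖^2)
      rw [show Lf * t * ‖d‖^2 = Lf/2*(2*t)*‖d‖^2 by ring]
      exact h5
    exact (h1.sub h2).sub h3
  have hmono : AntitoneOn φ (Icc 0 1) := by
    apply antitoneOn_of_deriv_nonpos (convex_Icc 0 1)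
    · exact (Differentiable.continuous (fun t => (hder t).differentiableAt)).continuousOn
    · exact (Differentiable.differentiableOn (fun t => (hder t).differentiableAt))
    · intro t ht
      rw [interior_Icc] at ht
      rw [(hder t).deriv]
      have hcs : ⟪f' (b + t • d) - f' b, d⟫_ℝ ≤ ‖f' (b + t • d) - f' b‖ * ‖d‖ :=
        real_inner_le_norm _ _
      have hl := hflip (b + t • d) b
      have h4 : (b + t • d) - b = t • d := by abel
      rw [h4, norm_smul, Real.norm_eq_abs, abs_of_pos ht.1] at hl
      have h5 : ⟪f' (b + t • d) - f' b, d⟫_ℝ = ⟪f' (b + t • d), d⟫_ℝ - ⟪f' b, d⟫_ℝ :=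
        inner_sub_left _ _ _
      nlinarith [norm_nonneg d, norm_nonneg (f' (b + t • d) - f' b), ht.1]
  have h01 := hmono (by constructor <;> norm_num : (0:ℝ) ∈ Icc (0:ℝ) 1)
    (by constructor <;> norm_num : (1:ℝ) ∈ Icc (0:ℝ) 1) zero_le_one
  have he0 : φ 0 = f b := by simp [hφ]
  have he1 : φ 1 = f a - ⟪f' b, d⟫_ℝ - Lf/2 * ‖d‖^2 := by
    simp [hφ, hd]
  rw [he0, he1] at h01
  linarith

lemma auxInterp {n : ℕ} (f : Euc n → ℝ) (f' : Euc n → Euc n) (Lf : ℝ) (hLf : 0 < Lf)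
    (hconv : ConvexOn ℝ Set.univ f)
    (hfgrad : ∀ z, HasGradientAt f (f' z) z)
    (hflip : ∀ z w, ‖f' z - f' w‖ ≤ Lf * ‖z - w‖) (b a : Euc n) :
    f b + ⟪f' b, a - b⟫_ℝ + 1/(2*Lf) * ‖f' a - f' b‖^2 ≤ f a := by
  set c := f' b with hc
  set φ : Euc n → ℝ := fun z => f z - ⟪c, z⟫_ℝ with hφ
  set φ' : Euc n → Euc n := fun z => f' z - c with hφ'
  have hφgrad : ∀ z, HasGradientAt φ (φ' z) z := by
    intro z
    rw [hasGradientAt_iff_hasFDerivAt]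
    have h1 : HasFDerivAt f (InnerProductSpace.toDual ℝ _ (f' z)) z :=
      hasGradientAt_iff_hasFDerivAt.mp (hfgrad z)
    have h2 : HasFDerivAt (fun w : Euc n => ⟪c, w⟫_ℝ) (InnerProductSpace.toDual ℝ _ c) z := by
      have h2' := (InnerProductSpace.toDual ℝ (Euc n) c).hasFDerivAt (x := z)
      convert h2' using 2
      rw [InnerProductSpace.toDual_apply_apply]
    have h3 := h1.sub h2
    have h4 : InnerProductSpace.toDual ℝ (Euc n) (φ' z)
        = InnerProductSpace.toDual ℝ (Euc n) (f' z) - InnerProductSpace.toDual ℝ (Euc n) c := by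
      simp [hφ', map_sub]
    rw [h4]
    exact h3
  have hφconv : ConvexOn ℝ Set.univ φ := by
    refine ⟨convex_univ, ?_⟩
    intro p _ q _ α β hα hβ hαβ
    have hcv := hconv.2 (mem_univ p) (mem_univ q) hα hβ hαβ
    simp only [hφ, smul_eq_mul]
    rw [inner_add_right, real_inner_smul_right, real_inner_smul_right]
    simp only [smul_eq_mul] at hcv
    linarith
  have hφlip : ∀ z w, ‖φ' z - φ' w‖ ≤ Lf * ‖z - w‖ := by
    intro z w
    have : φ' z - φ' w = f' z - f' w := by simp [hφ']
    rw [this]; exact hflip z w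
  have hmin : φ b ≤ φ (a - (1/Lf) • (f' a - c)) := by
    have h5 := convex_grad_ineq φ φ' hφconv hφgrad b (a - (1/Lf) • (f' a - c))
    have h6 : φ' b = 0 := by simp [hφ', hc]
    rw [h6, inner_zero_left, add_zero] at h5
    exact h5
  have hB := auxDescent φ φ' Lf hLf hφgrad hφlip a (a - (1/Lf) • (f' a - c))
  set G := f' a - c with hG
  have h7 : (a - (1/Lf) • G) - a = -((1/Lf) • G) := by abel
  have h8 : ⟪φ' a, (a - (1/Lf) • G) - a⟫_ℝ = -(1/Lf) * ‖G‖^2 := by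
    rw [h7]
    have : φ' a = G := by simp [hφ', hG]
    rw [this, inner_neg_right, real_inner_smul_right, real_inner_self_eq_norm_sq]
    ring
  have h9 : ‖(a - (1/Lf) • G) - a‖^2 = (1/Lf)^2 * ‖G‖^2 := by
    rw [h7, norm_neg, norm_smul, Real.norm_eq_abs, mul_pow, sq_abs]
  rw [h8, h9] at hB
  have h10 : φ b ≤ φ a - 1/(2*Lf) * ‖G‖^2 := by
    have harith : -(1/Lf) * ‖G‖^2 + Lf/2 * ((1/Lf)^2 * ‖G‖^2) = -(1/(2*Lf)) * ‖G‖^2 := by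
      field_simp
      ring
    nlinarith [hmin, hB]
  have h11 : φ b = f b - ⟪c, b⟫_ℝ := rfl
  have h12 : φ a = f a - ⟪c, a⟫_ℝ := rfl
  have h13 : ⟪c, a⟫_ℝ - ⟪c, b⟫_ℝ = ⟪c, a - b⟫_ℝ := (inner_sub_right _ _ _).symm
  rw [h11, h12] at h10
  have : ‖f' a - f' b‖ = ‖G‖ := by rw [hG, hc]
  rw [this]
  linarith


lemma expand2 {n : ℕ} (t s : ℝ) (a b : Euc n) :
    ‖t • a + s • b‖^2 = t^2 * ‖a‖^2 + 2*t*s*⟪a, b⟫_ℝ + s^2 * ‖b‖^2 := by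
  rw [norm_add_sq_real, real_inner_smul_left, real_inner_smul_right,
    norm_smul, norm_smul, Real.norm_eq_abs, Real.norm_eq_abs, mul_pow, mul_pow,
    sq_abs, sq_abs]
  ring

lemma expand3 {n : ℕ} (α β γ : ℝ) (p q r : Euc n) :
    ‖α • p + β • q + γ • r‖^2 = α^2*‖p‖^2 + β^2*‖q‖^2 + γ^2*‖r‖^2
      + 2*α*β*⟪p, q⟫_ℝ + 2*α*γ*⟪p, r⟫_ℝ + 2*β*γ*⟪q, r⟫_ℝ := by
  rw [norm_add_sq_real, expand2]
  simp only [inner_add_left, real_inner_smul_left, real_inner_smul_right,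
    norm_smul, Real.norm_eq_abs, mul_pow, sq_abs]
  ring

/-- The key SOS inequality with θ = Lf/(Lf+2λ). -/
lemma auxSOS {n : ℕ} (Lf lam : ℝ) (hLf : 0 < Lf) (hlam : 0 < lam)
    (a d u w : Euc n) :
    0 ≤ -(Lf/(Lf+2*lam)) * ⟪d, u⟫_ℝ - (1 - Lf/(Lf+2*lam)) * ⟪d, w⟫_ℝ
      + 1/(2*Lf) * ((Lf/(Lf+2*lam)) * ‖a‖^2 + (Lf/(Lf+2*lam)) * ‖d‖^2
          + (1 - Lf/(Lf+2*lam)) * ‖a - d‖^2)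
      + Lf/2 * ⟪u, w⟫_ℝ + lam/2 * ‖w‖^2 + Lf^2/(8*lam) * ‖u‖^2 := by
  set S := Lf + 2*lam with hS
  have hS0 : 0 < S := by positivity
  have hL4 : 0 < Lf + 4*lam := by positivity
  set E := -(Lf/S) * ⟪d, u⟫_ℝ - (1 - Lf/S) * ⟪d, w⟫_ℝ
      + 1/(2*Lf) * ((Lf/S) * ‖a‖^2 + (Lf/S) * ‖d‖^2 + (1 - Lf/S) * ‖a - d‖^2)
      + Lf/2 * ⟪u, w⟫_ℝ + lam/2 * ‖w‖^2 + Lf^2/(8*lam) * ‖u‖^2 with hE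
  have hN1 : ‖S • a + (-(2*lam)) • d‖^2
      = S^2*‖a‖^2 + 2*S*(-(2*lam))*⟪a, d⟫_ℝ + (2*lam)^2*‖d‖^2 := by
    rw [expand2]; ring
  have hN2 : ‖(Lf+4*lam) • d + (-(S*Lf)) • u + (-(2*lam*S)) • w‖^2
      = (Lf+4*lam)^2*‖d‖^2 + (S*Lf)^2*‖u‖^2 + (2*lam*S)^2*‖w‖^2
        - 2*(Lf+4*lam)*(S*Lf)*⟪d, u⟫_ℝ - 2*(Lf+4*lam)*(2*lam*S)*⟪d, w⟫_ℝ
        + 2*(S*Lf)*(2*lam*S)*⟪u, w⟫_ℝ := by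
    rw [expand3]; ring
  have hN3 : ‖Lf • u + (2*lam) • w‖^2
      = Lf^2*‖u‖^2 + 2*Lf*(2*lam)*⟪u, w⟫_ℝ + (2*lam)^2*‖w‖^2 := by
    rw [expand2]
  have hAD : ‖a - d‖^2 = ‖a‖^2 - 2*⟪a, d⟫_ℝ + ‖d‖^2 := norm_sub_sq_real a d
  have hkey : E * (8*lam*Lf*S^2*(Lf+4*lam))
      = 4*lam*(Lf+4*lam) * ‖S • a + (-(2*lam)) • d‖^2
        + 4*lam*Lf * ‖(Lf+4*lam) • d + (-(S*Lf)) • u + (-(2*lam*S)) • w‖^2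
        + Lf^2*S^2 * ‖Lf • u + (2*lam) • w‖^2 := by
    rw [hN1, hN2, hN3, hE, hAD, hS]
    field_simp
    ring
  have hpos : 0 ≤ E * (8*lam*Lf*S^2*(Lf+4*lam)) := by
    rw [hkey]
    positivity
  have hM : 0 < 8*lam*Lf*S^2*(Lf+4*lam) := by positivity
  rw [mul_comm] at hpos
  exact nonneg_of_mul_nonneg_right hpos hM


/-- One-step descent inequality: with `λ > 0`, `δ ∈ (0, 2λ/L_f)`,
`μ = 2/(2λ + L_f)`, `τ = L_f²δ²/(8λ)`, if `η ∈ ∂h(x)`,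
`x⁺ = Prox_{μg}((1-μλ)y - μ∇f(y) + μλx + μη)` and `‖x⁺ - y‖ ≤ δ‖x' - x‖`, then `F(x⁺)` is
finite and `(λ/2)‖x - x⁺‖² ≤ F(x) - F(x⁺) + τ‖x' - x‖²` in the extended reals,
where `F = f + g - h`. -/
theorem stmt4 {n : ℕ}
    (f : Euc n → ℝ) (f' : Euc n → Euc n) (Lf : ℝ) (hLf : 0 < Lf)
    (hfconv : ConvexOn ℝ Set.univ f)
    (hfgrad : ∀ z, HasGradientAt f (f' z) z)
    (hflip : ∀ z w, ‖f' z - f' w‖ ≤ Lf * ‖z - w‖)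
    (g : Euc n → EReal) (hgproper : ProperE g) (hgconv : ConvexEReal g)
    (hglsc : LowerSemicontinuous g)
    (h : Euc n → ℝ) (hhconv : ConvexOn ℝ Set.univ h)
    (F : Euc n → EReal) (hF : ∀ z, F z = ((f z - h z : ℝ) : EReal) + g z)
    (P : ℝ → Euc n → Euc n) (hP : IsProx g P)
    (lam δ mu tau : ℝ) (hlam : 0 < lam) (hδ : δ ∈ Set.Ioo 0 (2*lam/Lf))
    (hmu : mu = 2/(2*lam + Lf)) (htau : tau = Lf^2 * δ^2 / (8*lam))
    (x x' y η xp : Euc n) (hη : η ∈ SubdiffR h x)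
    (hxp : xp = P mu ((1 - mu*lam) • y - mu • f' y + (mu*lam) • x + mu • η))
    (hy : ‖xp - y‖ ≤ δ * ‖x' - x‖) :
    F xp ≠ ⊤ ∧
      ((lam/2 * ‖x - xp‖^2 : ℝ) : EReal) ≤ F x - F xp + ((tau * ‖x' - x‖^2 : ℝ) : EReal) := by
  obtain ⟨hδ0, hδ2⟩ := hδ
  have hS0 : (0:ℝ) < 2*lam + Lf := by linarith
  have hmu0 : 0 < mu := by rw [hmu]; positivity
  set v := (1 - mu*lam) • y - mu • f' y + (mu*lam) • x + mu • η with hv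
  clear_value v
  have hPI : ∀ z, g xp + ((1/(2*mu) * ‖v - xp‖^2 : ℝ) : EReal)
      ≤ g z + ((1/(2*mu) * ‖v - z‖^2 : ℝ) : EReal) := (hP mu hmu0 v xp).mp hxp.symm
  have hgxpbot : g xp ≠ ⊥ := hgproper.1 xp
  obtain ⟨z0, hz0⟩ := hgproper.2
  have hgxptop : g xp ≠ ⊤ := by
    intro hT
    have h1 := hPI z0
    rw [hT, EReal.top_add_coe] at h1
    have h2 : g z0 + ((1/(2*mu) * ‖v - z0‖^2 : ℝ) : EReal) = ⊤ := top_le_iff.mp h1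
    have h3 : g z0 = ((g z0).toReal : EReal) := (EReal.coe_toReal hz0 (hgproper.1 z0)).symm
    rw [h3, ← EReal.coe_add] at h2
    exact (EReal.coe_ne_top _) h2
  set Gp := (g xp).toReal with hGpdef
  clear_value Gp
  have hGpe : g xp = (Gp : EReal) := by
    rw [hGpdef]; exact (EReal.coe_toReal hgxptop hgxpbot).symm
  have hFxp : F xp = ((f xp - h xp + Gp : ℝ) : EReal) := by
    rw [hF, hGpe, ← EReal.coe_add]
  refine ⟨by rw [hFxp]; exact EReal.coe_ne_top _, ?_⟩
  by_cases hgx : g x = ⊤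
  · have hFx : F x = ⊤ := by rw [hF, hgx, EReal.coe_add_top]
    rw [hFx, hFxp, EReal.top_sub_coe, EReal.top_add_coe]
    exact le_top
  have hgxbot := hgproper.1 x
  set Gx := (g x).toReal with hGxdef
  clear_value Gx
  have hGxe : g x = (Gx : EReal) := by
    rw [hGxdef]; exact (EReal.coe_toReal hgx hgxbot).symm
  set c : ℝ := 1/(2*mu) with hc
  clear_value c
  have hc0 : 0 < c := by rw [hc]; positivity
  set A := ‖v - xp‖^2 with hA
  set B := ‖v - x‖^2 with hB
  set T := ‖x - xp‖^2 with hT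
  clear_value A B T
  -- strengthened prox inequality via t → 0
  have hkeyt : ∀ t : ℝ, t ∈ Ioo (0:ℝ) 1 → Gp + c*A + c*(1-t)*T ≤ Gx + c*B := by
    intro t ht
    have hzc := hgconv xp x (1-t) t (by linarith [ht.2]) (le_of_lt ht.1) (by ring)
    rw [hGpe, hGxe] at hzc
    set zt := (1-t) • xp + t • x with hzt
    clear_value zt
    have hconvz : g zt ≤ (((1-t)*Gp + t*Gx : ℝ) : EReal) := by
      calc g zt ≤ ((1-t : ℝ) : EReal) * (Gp : EReal) + ((t:ℝ) : EReal) * (Gx : EReal) := hzc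
      _ = (((1-t)*Gp + t*Gx : ℝ) : EReal) := by
          rw [← EReal.coe_mul, ← EReal.coe_mul, ← EReal.coe_add]
    have h1 := hPI zt
    rw [hGpe, ← EReal.coe_add] at h1
    have h2 : g zt + ((c * ‖v - zt‖^2 : ℝ) : EReal)
        ≤ ((((1-t)*Gp + t*Gx) + c * ‖v - zt‖^2 : ℝ) : EReal) := by
      rw [EReal.coe_add]
      exact add_le_add_left hconvz _
    have h3 := le_trans h1 h2
    rw [EReal.coe_le_coe_iff] at h3
    -- norm identity
    have hvz : v - zt = (1-t) • (v - xp) + t • (v - x) := by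
      rw [hzt]; module
    have hsub : T = A - 2*⟪v - xp, v - x⟫_ℝ + B := by
      have h4 : x - xp = (v - xp) - (v - x) := by abel
      rw [hT, h4, norm_sub_sq_real, hA, hB]
    have hnz : ‖v - zt‖^2 = (1-t)*A + t*B - t*(1-t)*T := by
      rw [hvz, expand2, hA, hB]
      linear_combination (t*(1-t)) * hsub + (t-t^2)*hA + (t-t^2)*hB
    rw [hnz] at h3
    have h6 : t*(Gp + c*A + c*(1-t)*T) ≤ t*(Gx + c*B) := by
      have hcmu : c = 1/(2*mu) := hc
      nlinarith [h3]
    exact le_of_mul_le_mul_left h6 ht.1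
  have hprox : Gp + c*A + c*T ≤ Gx + c*B := by
    by_contra hcon
    push_neg at hcon
    have hT0 : 0 ≤ T := by rw [hT]; positivity
    have hε0 : 0 < Gp + c*A + c*T - (Gx + c*B) := by linarith
    rcases eq_or_lt_of_le hT0 with hTz | hTp
    · have h7 := hkeyt (1/2) ⟨by norm_num, by norm_num⟩
      have hcT : c*T = 0 := by rw [← hTz]; ring
      have hcT2 : c*(1-(1:ℝ)/2)*T = 0 := by rw [← hTz]; ring
      linarith
    · have hε0' : 0 < (Gp + c*A + c*T - (Gx + c*B))/(2*c*T) := by positivity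
      set t0 := min (1/2) ((Gp + c*A + c*T - (Gx + c*B))/(2*c*T)) with ht0
      have ht0mem : t0 ∈ Ioo (0:ℝ) 1 := by
        constructor
        · exact lt_min (by norm_num) hε0'
        · exact lt_of_le_of_lt (min_le_left _ _) (by norm_num)
      have h7 := hkeyt t0 ht0mem
      have h9 : t0 ≤ (Gp + c*A + c*T - (Gx + c*B))/(2*c*T) := min_le_right _ _
      have hcT0 : (0:ℝ) ≤ c*T := by positivity
      have h10 := mul_le_mul_of_nonneg_left h9 hcT0
      have h11 : (c*T)*((Gp + c*A + c*T - (Gx + c*B))/(2*c*T))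
          = (Gp + c*A + c*T - (Gx + c*B))/2 := by
        field_simp
      rw [h11] at h10
      nlinarith [h7, h10, hε0, ht0mem.1]
  -- translate to inner product form
  set w := xp - x with hw
  set u := xp - y with hu
  clear_value w u
  have hxpv : xp - v = u + (mu*lam) • (w - u) + mu • (f' y) - mu • η := by
    rw [hv, hu, hw]; module
  have hid1 : A + T - B = 2*⟪xp - v, w⟫_ℝ := by
    have h9 : v - x = (v - xp) + w := by rw [hw]; abel
    have h10 : B = A + 2*⟪v - xp, w⟫_ℝ + ‖w‖^2 := by
      rw [hB, h9, norm_add_sq_real, hA]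
    have h11 : T = ‖w‖^2 := by rw [hT, hw, norm_sub_rev]
    have h12 : ⟪xp - v, w⟫_ℝ = -⟪v - xp, w⟫_ℝ := by
      rw [show xp - v = -(v - xp) by abel, inner_neg_left]
    rw [h11, h10, h12]; ring
  have hIP : ⟪xp - v, w⟫_ℝ = ⟪u, w⟫_ℝ + mu*lam*(‖w‖^2 - ⟪u, w⟫_ℝ)
      + mu*⟪f' y, w⟫_ℝ - mu*⟪η, w⟫_ℝ := by
    rw [hxpv]
    simp only [inner_sub_left, inner_add_left, real_inner_smul_left, inner_sub_left]
    rw [real_inner_self_eq_norm_sq]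
  have hP1 : lam*‖w‖^2 + Lf/2*⟪u, w⟫_ℝ + ⟪f' y, w⟫_ℝ - ⟪η, w⟫_ℝ ≤ Gx - Gp := by
    have h13 : c*(A + T - B) ≤ Gx - Gp := by linarith
    rw [hid1, hIP] at h13
    have h14 : c*(2*(⟪u, w⟫_ℝ + mu*lam*(‖w‖^2 - ⟪u, w⟫_ℝ)
        + mu*⟪f' y, w⟫_ℝ - mu*⟪η, w⟫_ℝ))
        = lam*‖w‖^2 + Lf/2*⟪u, w⟫_ℝ + ⟪f' y, w⟫_ℝ - ⟪η, w⟫_ℝ := by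
      rw [hc, hmu]
      field_simp
      ring
    linarith [h13, h14.symm.le]
  have hP2 : h x + ⟪η, w⟫_ℝ ≤ h xp := by
    have := hη xp
    rw [← hw] at this
    exact this
  -- f interpolation inequalities
  set a := f' x - f' y with ha
  set d := f' xp - f' y with hd
  clear_value a d
  have e1 : ⟪f' y, x - y⟫_ℝ = ⟪f' y, u⟫_ℝ - ⟪f' y, w⟫_ℝ := by
    rw [show x - y = u - w by rw [hu, hw]; abel, inner_sub_right]
  have e2 : ⟪f' xp, y - xp⟫_ℝ = -⟪f' y, u⟫_ℝ - ⟪d, u⟫_ℝ := by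
    rw [show f' xp = f' y + d by rw [hd]; abel,
      show y - xp = -u by rw [hu]; abel, inner_neg_right, inner_add_left]
    ring
  have e3 : ⟪f' xp, x - xp⟫_ℝ = -⟪f' y, w⟫_ℝ - ⟪d, w⟫_ℝ := by
    rw [show f' xp = f' y + d by rw [hd]; abel,
      show x - xp = -w by rw [hw]; abel, inner_neg_right, inner_add_left]
    ring
  have hc1 := auxInterp f f' Lf hLf hfconv hfgrad hflip y x
  have hc2 := auxInterp f f' Lf hLf hfconv hfgrad hflip xp y
  have hc3 := auxInterp f f' Lf hLf hfconv hfgrad hflip xp x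
  rw [e1, ← ha] at hc1
  rw [e2, show f' y - f' xp = -d by rw [hd]; abel, norm_neg] at hc2
  rw [e3, show f' x - f' xp = a - d by rw [ha, hd]; abel] at hc3
  set θ := Lf/(Lf+2*lam) with hθ
  clear_value θ
  have hθ0 : 0 ≤ θ := by rw [hθ]; positivity
  have hθ1 : 0 ≤ 1 - θ := by
    rw [hθ, sub_nonneg]
    rw [div_le_one (by linarith)]
    linarith
  have hc12 : f xp ≤ f x + ⟪f' y, w⟫_ℝ + ⟪d, u⟫_ℝ - 1/(2*Lf)*(‖a‖^2 + ‖d‖^2) := by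
    linarith [hc1, hc2]
  have hc3' : f xp ≤ f x + ⟪f' y, w⟫_ℝ + ⟪d, w⟫_ℝ - 1/(2*Lf)*‖a - d‖^2 := by
    linarith [hc3]
  have hP3 : f xp ≤ f x + ⟪f' y, w⟫_ℝ + θ*⟪d, u⟫_ℝ + (1-θ)*⟪d, w⟫_ℝ
      - 1/(2*Lf)*(θ*‖a‖^2 + θ*‖d‖^2 + (1-θ)*‖a - d‖^2) := by
    have m1 := mul_le_mul_of_nonneg_left hc12 hθ0
    have m2 := mul_le_mul_of_nonneg_left hc3' hθ1
    nlinarith [m1, m2]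
  have hP4 := auxSOS Lf lam hLf hlam a d u w
  rw [← hθ] at hP4
  have hP5 : Lf^2/(8*lam)*‖u‖^2 ≤ tau*‖x' - x‖^2 := by
    have h11 : ‖u‖^2 ≤ δ^2*‖x' - x‖^2 := by
      nlinarith [hy, norm_nonneg u, norm_nonneg (x' - x), hδ0]
    have h12 := mul_le_mul_of_nonneg_left h11 (by positivity : (0:ℝ) ≤ Lf^2/(8*lam))
    have h13 : Lf^2/(8*lam)*(δ^2*‖x' - x‖^2) = tau*‖x' - x‖^2 := by
      rw [htau]; ring
    linarith
  have hKEY : lam/2*‖w‖^2 ≤ (f x - h x + Gx) - (f xp - h xp + Gp) + tau*‖x' - x‖^2 := by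
    linarith [hP1, hP2, hP3, hP4, hP5]
  have hFx : F x = ((f x - h x + Gx : ℝ) : EReal) := by
    rw [hF, hGxe, ← EReal.coe_add]
  rw [hFx, hFxp, ← EReal.coe_sub, ← EReal.coe_add, EReal.coe_le_coe_iff]
  have hgoalw : ‖x - xp‖ = ‖w‖ := by rw [hw, norm_sub_rev]
  rw [hT, hgoalw]
  linarith [hKEY]
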